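/- Fix a real g > 0 and positive integers a, b; set ω₁ = a·g, ω₂ = b·g, T = 2π/g, and for a positive integer M let t_i = T(i−1)/M for i = 1, …, M. Let p be a positive integer, assume M > 2p·max(a, b), and let m, n, m′, n′ be integers with |m| + |n| ≤ p, |m′| + |n′| ≤ p and |m·a + n·b| ≠ |m′·a + n′·b|. Then both (2/M)·∑_{i=1}^{M} cos((m ω₁ + n ω₂) t_i)·cos((m′ ω₁ + n′ ω₂) t_i) = 0 and (2/M)·∑_{i=1}^{M} sin((m ω₁ + n ω₂) t_i)·sin((m′ ω₁ + n′ ω₂) t_i) = 0. -/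

import Mathlib

open Real

lemma cos_sin_sum_zero (M : ℕ) (hM : 0 < M) (k : ℤ) (h : ¬ (M:ℤ) ∣ k) :
    ∑ i ∈ Finset.range M, Real.cos (2*π*k*i/M) = 0 ∧
    ∑ i ∈ Finset.range M, Real.sin (2*π*k*i/M) = 0 := by
  have hMc : (M : ℂ) ≠ 0 := Nat.cast_ne_zero.mpr hM.ne'
  have h2πI : (2*π*Complex.I : ℂ) ≠ 0 := by
    simp [Complex.I_ne_zero]
  set x : ℂ := Complex.exp (2*π*Complex.I*k/M) with hx
  have hx1 : x ≠ 1 := by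
    rw [hx, Ne, Complex.exp_eq_one_iff]
    rintro ⟨j, hj⟩
    apply h
    have hj2 : (2*π*Complex.I) * k = (2*π*Complex.I) * (j * M) := by
      field_simp at hj; linear_combination (2*π*Complex.I) * hj
    have : (k : ℂ) = j * M := mul_left_cancel₀ h2πI hj2
    have : k = j * (M:ℤ) := by exact_mod_cast this
    exact ⟨j, by linarith⟩
  have hxM : x ^ M = 1 := by
    rw [hx, ← Complex.exp_nat_mul]
    have : (M : ℂ) * (2*π*Complex.I*k/M) = k * (2*π*Complex.I) := by
      rw [mul_comm, div_mul_cancel₀ _ hMc]; ring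
    rw [this, Complex.exp_int_mul_two_pi_mul_I]
  have hsum : ∑ i ∈ Finset.range M, x ^ i = 0 := by
    rw [geom_sum_eq hx1, hxM]; simp
  have hre : ∀ i : ℕ, (x ^ i).re = Real.cos (2*π*k*i/M) := by
    intro i
    rw [hx, ← Complex.exp_nat_mul]
    have : (i : ℂ) * (2*π*Complex.I*k/M) = ((2*π*k*i/M : ℝ) : ℂ) * Complex.I := by
      push_cast; ring
    rw [this, Complex.exp_ofReal_mul_I_re]
  have him : ∀ i : ℕ, (x ^ i).im = Real.sin (2*π*k*i/M) := by
    intro i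
    rw [hx, ← Complex.exp_nat_mul]
    have : (i : ℂ) * (2*π*Complex.I*k/M) = ((2*π*k*i/M : ℝ) : ℂ) * Complex.I := by
      push_cast; ring
    rw [this, Complex.exp_ofReal_mul_I_im]
  constructor
  · calc ∑ i ∈ Finset.range M, Real.cos (2*π*k*i/M)
        = ∑ i ∈ Finset.range M, (x ^ i).re :=
          Finset.sum_congr rfl fun i _ => (hre i).symm
      _ = (∑ i ∈ Finset.range M, x ^ i).re := (Complex.re_sum _ _).symm
      _ = 0 := by rw [hsum]; rfl
  · calc ∑ i ∈ Finset.range M, Real.sin (2*π*k*i/M)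
        = ∑ i ∈ Finset.range M, (x ^ i).im :=
          Finset.sum_congr rfl fun i _ => (him i).symm
      _ = (∑ i ∈ Finset.range M, x ^ i).im := (Complex.im_sum _ _).symm
      _ = 0 := by rw [hsum]; rfl

/-- Theorem 2, condition (a), off-diagonal part: with `ω₁ = a g`, `ω₂ = b g`,
sampling period `T = 2π/g`, nodes `t_i = T(i-1)/M`, truncation order `p`, and
`M > 2 p max(a,b)`, the discrete Galerkin products between two truncation
harmonics of different absolute frequency vanish exactly. -/
theorem RMHB_discrete_offdiag_vanish (g : ℝ) (hg : 0 < g) (a b : ℕ)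
    (ha : 0 < a) (hb : 0 < b) (p M : ℕ) (hp : 0 < p)
    (hM : 2 * p * max a b < M)
    (m n m' n' : ℤ) (hmn : m.natAbs + n.natAbs ≤ p) (hmn' : m'.natAbs + n'.natAbs ≤ p)
    (hne : |m * (a : ℤ) + n * (b : ℤ)| ≠ |m' * (a : ℤ) + n' * (b : ℤ)|) :
    (2 / (M : ℝ)) * ∑ i ∈ Finset.Icc 1 M,
        Real.cos (((m : ℝ) * ((a : ℝ) * g) + (n : ℝ) * ((b : ℝ) * g)) *
            ((2 * π / g) * ((i : ℝ) - 1) / M)) *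
          Real.cos (((m' : ℝ) * ((a : ℝ) * g) + (n' : ℝ) * ((b : ℝ) * g)) *
            ((2 * π / g) * ((i : ℝ) - 1) / M)) = 0 ∧
    (2 / (M : ℝ)) * ∑ i ∈ Finset.Icc 1 M,
        Real.sin (((m : ℝ) * ((a : ℝ) * g) + (n : ℝ) * ((b : ℝ) * g)) *
            ((2 * π / g) * ((i : ℝ) - 1) / M)) *
          Real.sin (((m' : ℝ) * ((a : ℝ) * g) + (n' : ℝ) * ((b : ℝ) * g)) *
            ((2 * π / g) * ((i : ℝ) - 1) / M)) = 0 := by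
  have hMpos : 0 < M := (Nat.zero_le _).trans_lt hM
  have hgne : g ≠ 0 := hg.ne'
  have hMr : (M:ℝ) ≠ 0 := Nat.cast_ne_zero.mpr hMpos.ne'
  set k : ℤ := m * a + n * b with hk
  set k' : ℤ := m' * a + n' * b with hk'
  -- bound
  have habs : ∀ (μ ν : ℤ), μ.natAbs + ν.natAbs ≤ p →
      |μ * (a:ℤ) + ν * (b:ℤ)| ≤ (p * max a b : ℤ) := by
    intro μ ν h
    have h1 : |μ * (a:ℤ) + ν * (b:ℤ)| ≤ |μ| * a + |ν| * b := by
      calc |μ * (a:ℤ) + ν * (b:ℤ)| ≤ |μ * (a:ℤ)| + |ν * (b:ℤ)| := abs_add_le _ _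
        _ = |μ| * a + |ν| * b := by
            rw [abs_mul, abs_mul, abs_of_nonneg (by positivity : (0:ℤ) ≤ (a:ℤ)),
              abs_of_nonneg (by positivity : (0:ℤ) ≤ (b:ℤ))]
    have ha' : (a:ℤ) ≤ (max a b : ℕ) := by exact_mod_cast le_max_left a b
    have hb' : (b:ℤ) ≤ (max a b : ℕ) := by exact_mod_cast le_max_right a b
    have hsum : |μ| + |ν| ≤ (p:ℤ) := by
      rw [Int.abs_eq_natAbs, Int.abs_eq_natAbs]
      exact_mod_cast h
    have hc : (0:ℤ) ≤ (max a b : ℕ) := by positivity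
    nlinarith [abs_nonneg μ, abs_nonneg ν]
  -- non-divisibility
  have hnd : ∀ d : ℤ, d ≠ 0 → |d| ≤ (2 * p * max a b : ℤ) → ¬ (M:ℤ) ∣ d := by
    intro d hd0 hdle hdvd
    have h1 : (M:ℤ) ≤ |d| := Int.le_of_dvd (abs_pos.mpr hd0) ((dvd_abs _ _).mpr hdvd)
    have h2 : (2 * p * max a b : ℤ) < (M:ℤ) := by exact_mod_cast hM
    omega
  have hbk : |k| ≤ (p * max a b : ℤ) := habs m n hmn
  have hbk' : |k'| ≤ (p * max a b : ℤ) := habs m' n' hmn'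
  have hdiff : ¬ (M:ℤ) ∣ (k - k') := by
    apply hnd _ (sub_ne_zero.mpr (fun h => hne (by rw [h])))
    calc |k - k'| ≤ |k| + |k'| := abs_sub _ _
      _ ≤ (2 * p * max a b : ℤ) := by linarith
  have hsumne : k + k' ≠ 0 := by
    intro h
    apply hne
    rw [show k = -k' by linarith, abs_neg]
  have hsumd : ¬ (M:ℤ) ∣ (k + k') := by
    apply hnd _ hsumne
    calc |k + k'| ≤ |k| + |k'| := abs_add_le _ _
      _ ≤ (2 * p * max a b : ℤ) := by linarith
  obtain ⟨hcd, -⟩ := cos_sin_sum_zero M hMpos (k - k') hdiff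
  obtain ⟨hcs, -⟩ := cos_sin_sum_zero M hMpos (k + k') hsumd
  -- angle rewriting
  have harg : ∀ (μ ν : ℤ) (j : ℕ),
      ((μ:ℝ) * ((a:ℝ) * g) + (ν:ℝ) * ((b:ℝ) * g)) *
        ((2 * π / g) * (((1 + j : ℕ) : ℝ) - 1) / M)
      = 2 * π * ((μ * a + ν * b : ℤ) : ℝ) * j / M := by
    intro μ ν j
    push_cast
    field_simp
    ring
  have hIcc : ∀ f : ℕ → ℝ, ∑ i ∈ Finset.Icc 1 M, f i = ∑ j ∈ Finset.range M, f (1 + j) := by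
    intro f
    rw [← Finset.Ico_add_one_right_eq_Icc, Finset.sum_Ico_eq_sum_range]
    simp
  constructor
  · have : ∑ i ∈ Finset.Icc 1 M,
        Real.cos (((m : ℝ) * ((a : ℝ) * g) + (n : ℝ) * ((b : ℝ) * g)) *
            ((2 * π / g) * ((i : ℝ) - 1) / M)) *
          Real.cos (((m' : ℝ) * ((a : ℝ) * g) + (n' : ℝ) * ((b : ℝ) * g)) *
            ((2 * π / g) * ((i : ℝ) - 1) / M)) = 0 := by
      rw [hIcc]
      have : ∀ j ∈ Finset.range M,
          Real.cos (((m : ℝ) * ((a : ℝ) * g) + (n : ℝ) * ((b : ℝ) * g)) *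
              ((2 * π / g) * (((1 + j : ℕ) : ℝ) - 1) / M)) *
            Real.cos (((m' : ℝ) * ((a : ℝ) * g) + (n' : ℝ) * ((b : ℝ) * g)) *
              ((2 * π / g) * (((1 + j : ℕ) : ℝ) - 1) / M))
          = (Real.cos (2*π*((k - k' : ℤ):ℝ)*j/M) + Real.cos (2*π*((k + k' : ℤ):ℝ)*j/M)) / 2 := by
        intro j _
        rw [harg m n j, harg m' n' j]
        have h1 : 2*π*((k:ℤ):ℝ)*j/M - 2*π*((k':ℤ):ℝ)*j/M = 2*π*((k - k' : ℤ):ℝ)*j/M := by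
          push_cast; ring
        have h2 : 2*π*((k:ℤ):ℝ)*j/M + 2*π*((k':ℤ):ℝ)*j/M = 2*π*((k + k' : ℤ):ℝ)*j/M := by
          push_cast; ring
        have h3 := Real.two_mul_cos_mul_cos (2*π*((k:ℤ):ℝ)*j/M) (2*π*((k':ℤ):ℝ)*j/M)
        rw [h1, h2] at h3
        rw [hk, hk'] at h3 ⊢
        push_cast at h3 ⊢
        linarith
      rw [Finset.sum_congr rfl this]
      rw [← Finset.sum_div, Finset.sum_add_distrib, hcd, hcs]
      norm_num
    rw [this, mul_zero]
  · have : ∑ i ∈ Finset.Icc 1 M,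
        Real.sin (((m : ℝ) * ((a : ℝ) * g) + (n : ℝ) * ((b : ℝ) * g)) *
            ((2 * π / g) * ((i : ℝ) - 1) / M)) *
          Real.sin (((m' : ℝ) * ((a : ℝ) * g) + (n' : ℝ) * ((b : ℝ) * g)) *
            ((2 * π / g) * ((i : ℝ) - 1) / M)) = 0 := by
      rw [hIcc]
      have : ∀ j ∈ Finset.range M,
          Real.sin (((m : ℝ) * ((a : ℝ) * g) + (n : ℝ) * ((b : ℝ) * g)) *
              ((2 * π / g) * (((1 + j : ℕ) : ℝ) - 1) / M)) *
            Real.sin (((m' : ℝ) * ((a : ℝ) * g) + (n' : ℝ) * ((b : ℝ) * g)) *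
              ((2 * π / g) * (((1 + j : ℕ) : ℝ) - 1) / M))
          = (Real.cos (2*π*((k - k' : ℤ):ℝ)*j/M) - Real.cos (2*π*((k + k' : ℤ):ℝ)*j/M)) / 2 := by
        intro j _
        rw [harg m n j, harg m' n' j]
        have h1 : 2*π*((k:ℤ):ℝ)*j/M - 2*π*((k':ℤ):ℝ)*j/M = 2*π*((k - k' : ℤ):ℝ)*j/M := by
          push_cast; ring
        have h2 : 2*π*((k:ℤ):ℝ)*j/M + 2*π*((k':ℤ):ℝ)*j/M = 2*π*((k + k' : ℤ):ℝ)*j/M := by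
          push_cast; ring
        have h3 := Real.two_mul_sin_mul_sin (2*π*((k:ℤ):ℝ)*j/M) (2*π*((k':ℤ):ℝ)*j/M)
        rw [h1, h2] at h3
        rw [hk, hk'] at h3 ⊢
        push_cast at h3 ⊢
        linarith
      rw [Finset.sum_congr rfl this]
      rw [← Finset.sum_div, Finset.sum_sub_distrib, hcd, hcs]
      norm_num
    rw [this, mul_zero]
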